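/- Suppose the power series f(z) = Σ_{i=0}^∞ α_i z^i converges everywhere (radius of convergence ∞), and let g(z) = Σ_{i=1}^∞ α_i z^{i-1}. Let Ã = X T Yᵀ with X, Y ∈ ℝ^{n×r}, T ∈ ℝ^{r×r}, and Z = T Yᵀ X. Then f(Ã) = α_0·I_n + X·g(Z)·T·Yᵀ. -/
import Mathlib

open Matrix Filter

-- abs coefficient summability
lemma auxA (α : ℕ → ℝ) (hα : ∀ z : ℝ, Summable fun i : ℕ => α i * z ^ i)
    {x : ℝ} (hx : 0 ≤ x) : Summable fun i : ℕ => |α i| * x ^ i := by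
  have h := hα (x + 1)
  have hb : BddAbove (Set.range fun i => |α i * (x + 1) ^ i|) :=
    (h.tendsto_atTop_zero.abs.congr (by simp)).bddAbove_range
  obtain ⟨C, hC⟩ := hb
  have hx1 : (0:ℝ) < x + 1 := by linarith
  have hq : x / (x + 1) < 1 := by rw [div_lt_one hx1]; linarith
  have hq0 : 0 ≤ x / (x + 1) := div_nonneg hx hx1.le
  apply Summable.of_nonneg_of_le
    (fun i => mul_nonneg (abs_nonneg _) (pow_nonneg hx _))
    (fun i => ?_) ((summable_geometric_of_lt_one hq0 hq).mul_left C)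
  have hCi : |α i * (x + 1) ^ i| ≤ C := hC ⟨i, rfl⟩
  have : |α i| * x ^ i = |α i * (x + 1) ^ i| * (x / (x+1)) ^ i := by
    rw [abs_mul, abs_pow, abs_of_pos hx1, div_pow, mul_assoc,
      mul_div_assoc']
    field_simp
  rw [this]
  exact mul_le_mul_of_nonneg_right hCi (pow_nonneg hq0 _)

-- entry bound for powers
lemma auxB {m : ℕ} (M : Matrix (Fin m) (Fin m) ℝ) :
    ∃ c : ℝ, 0 ≤ c ∧ ∀ (i : ℕ) (j k : Fin m), |(M ^ i) j k| ≤ c ^ i := by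
  classical
  set e : ℝ := ∑ j : Fin m, ∑ k : Fin m, |M j k| with he
  have he0 : 0 ≤ e := Finset.sum_nonneg fun _ _ => Finset.sum_nonneg fun _ _ => abs_nonneg _
  have hentry : ∀ j k, |M j k| ≤ e := by
    intro j k
    calc |M j k| ≤ ∑ k' : Fin m, |M j k'| :=
          Finset.single_le_sum (f := fun k' => |M j k'|) (fun _ _ => abs_nonneg _) (Finset.mem_univ k)
      _ ≤ e := Finset.single_le_sum
          (f := fun j' => ∑ k' : Fin m, |M j' k'|)
          (fun _ _ => Finset.sum_nonneg fun _ _ => abs_nonneg _) (Finset.mem_univ j)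
  refine ⟨(m : ℝ) * e + 1, by positivity, ?_⟩
  intro i
  induction i with
  | zero =>
    intro j k
    simp only [pow_zero, Matrix.one_apply]
    split_ifs <;> simp
  | succ i ih =>
    intro j k
    have : (M ^ (i+1)) j k = ∑ l : Fin m, (M ^ i) j l * M l k := by
      rw [pow_succ]; rfl
    rw [this]
    calc |∑ l : Fin m, (M ^ i) j l * M l k| ≤ ∑ l : Fin m, |(M ^ i) j l * M l k| :=
          Finset.abs_sum_le_sum_abs _ _
      _ ≤ ∑ l : Fin m, ((m:ℝ) * e + 1) ^ i * e := by
          refine Finset.sum_le_sum fun l _ => ?_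
          rw [abs_mul]
          exact mul_le_mul (ih j l) (hentry l k) (abs_nonneg _)
            (pow_nonneg (by positivity) _)
      _ = (m : ℝ) * e * ((m:ℝ) * e + 1) ^ i := by
          rw [Finset.sum_const]; simp [Finset.card_univ]; ring
      _ ≤ ((m:ℝ) * e + 1) ^ (i+1) := by
          rw [pow_succ]
          rw [mul_comm]
          gcongr
          linarith

lemma auxC {m : ℕ} (β : ℕ → ℝ)
    (hβ : ∀ x : ℝ, 0 ≤ x → Summable fun i : ℕ => |β i| * x ^ i)
    (M : Matrix (Fin m) (Fin m) ℝ) : Summable fun i : ℕ => β i • M ^ i := by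
  obtain ⟨c, hc0, hc⟩ := auxB M
  refine Pi.summable.2 fun j => Pi.summable.2 fun k => ?_
  have heq : (fun i : ℕ => (β i • M ^ i) j k) = fun i : ℕ => β i * (M ^ i) j k := rfl
  rw [heq]
  refine Summable.of_abs ?_
  refine Summable.of_nonneg_of_le (fun i => abs_nonneg _) (fun i => ?_) (hβ c hc0)
  rw [abs_mul]
  exact mul_le_mul_of_nonneg_left (hc i j k) (abs_nonneg _)

theorem matrix_function_low_rank {n r : ℕ} (α : ℕ → ℝ)
    (hα : ∀ z : ℝ, Summable fun i : ℕ => α i * z ^ i)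
    (X Y : Matrix (Fin n) (Fin r) ℝ) (T : Matrix (Fin r) (Fin r) ℝ)
    (Z : Matrix (Fin r) (Fin r) ℝ) (hZ : Z = T * (Yᵀ * X)) :
    (∑' i : ℕ, α i • (X * T * Yᵀ) ^ i) =
      α 0 • (1 : Matrix (Fin n) (Fin n) ℝ) +
        X * (∑' i : ℕ, α (i + 1) • Z ^ i) * T * Yᵀ := by
  have hA0 : ∀ x : ℝ, 0 ≤ x → Summable fun i : ℕ => |α i| * x ^ i :=
    fun x hx => auxA α hα hx
  have hA1 : ∀ x : ℝ, 0 ≤ x → Summable fun i : ℕ => |α (i + 1)| * x ^ i := by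
    intro x hx
    have h := (summable_nat_add_iff 1).2 (hA0 (x + 1) (by linarith))
    refine Summable.of_nonneg_of_le
      (fun i => mul_nonneg (abs_nonneg _) (pow_nonneg hx _)) (fun i => ?_) h
    have hx1 : (1:ℝ) ≤ x + 1 := by linarith
    have : x ^ i ≤ (x + 1) ^ (i + 1) := by
      calc x ^ i ≤ (x + 1) ^ i := pow_le_pow_left₀ hx (by linarith) i
        _ ≤ (x + 1) ^ (i + 1) := pow_le_pow_right₀ hx1 (Nat.le_succ i)
    exact mul_le_mul_of_nonneg_left this (abs_nonneg _)
  have hA : Summable fun i : ℕ => α i • (X * T * Yᵀ) ^ i := auxC α hA0 _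
  have hZs : Summable fun i : ℕ => α (i + 1) • Z ^ i := auxC _ hA1 Z
  rw [Summable.tsum_eq_zero_add hA]
  have hpow : ∀ i : ℕ, (X * T * Yᵀ) ^ (i + 1) = X * (Z ^ i * (T * Yᵀ)) := by
    intro i
    induction i with
    | zero => simp [Matrix.mul_assoc]
    | succ i ih =>
      rw [pow_succ, ih, hZ]
      simp [pow_succ, Matrix.mul_assoc]
  have key : HasSum (fun i : ℕ => α (i + 1) • ((X * T * Yᵀ) ^ (i + 1)))
      (X * (∑' i : ℕ, α (i + 1) • Z ^ i) * T * Yᵀ) := by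
    have h1 : HasSum (fun i : ℕ => α (i + 1) • Z ^ i)
        (∑' i : ℕ, α (i + 1) • Z ^ i) := hZs.hasSum
    let L : Matrix (Fin r) (Fin r) ℝ →+ Matrix (Fin n) (Fin n) ℝ :=
      AddMonoidHom.mk' (fun M => X * (M * (T * Yᵀ)))
        (fun a b => by simp [Matrix.add_mul, Matrix.mul_add])
    have hLc : Continuous fun M : Matrix (Fin r) (Fin r) ℝ => X * (M * (T * Yᵀ)) :=
      continuous_const.matrix_mul (continuous_id.matrix_mul continuous_const)
    have h2 := h1.map L hLc
    have h3 : ∀ i : ℕ, L (α (i + 1) • Z ^ i) = α (i + 1) • (X * (Z ^ i * (T * Yᵀ))) := by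
      intro i
      simp [L, Matrix.smul_mul, Matrix.mul_smul]
    have h4 : L (∑' i : ℕ, α (i + 1) • Z ^ i) =
        X * (∑' i : ℕ, α (i + 1) • Z ^ i) * T * Yᵀ := by
      simp [L, Matrix.mul_assoc]
    rw [h4] at h2
    have h5 : (⇑L ∘ fun i : ℕ => α (i + 1) • Z ^ i) =
        fun i : ℕ => α (i + 1) • ((X * T * Yᵀ) ^ (i + 1)) :=
      funext fun i => by simp only [Function.comp_apply, h3 i, hpow i]
    rwa [h5] at h2
  rw [pow_zero, key.tsum_eq]
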